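/- arXiv:2401.11046 — 2 statements merged into one kernel-verified Lean document; each statement's English description precedes it below -/
import Mathlib

section
/- Proposition (differentiability and piecewise gradient of the profiled log-likelihood in the entry game). Let Θ ⊆ ℝ^{d_θ}, and let F₀₀, F₁₁, η₁, η₂, η₃ : Θ → (0,1) be continuously differentiable on int Θ with, for some c > 0 and all θ ∈ Θ: F₀₀(θ) ≥ c, F₁₁(θ) ≥ c, η₃(θ) ≤ η₂(θ), η_j(θ) ≥ c and η₁(θ) − η_j(θ) ≥ c for j = 2, 3, and η₁(θ) = 1 − F₀₀(θ) − F₁₁(θ). Let p₀₀, p₁₁, p₁₀, p₀₁ > 0 with sum 1, let z*(θ) be the clamp of η₁(θ) p₁₀/(p₁₀+p₀₁) to [η₃(θ), η₂(θ)], and define V(θ) = p₀₀ ln F₀₀(θ) + p₁₁ ln F₁₁(θ) + p₁₀ ln z*(θ) + p₀₁ ln(η₁(θ) − z*(θ)). Then V is differentiable on int Θ with ∇V(θ) = p₀₀ ∇F₀₀/F₀₀ + p₁₁ ∇F₁₁/F₁₁ + G(θ), where: G(θ) = (p₁₀+p₀₁) ∇η₁/η₁ if η₃ ≤ η₁ p₁₀/(p₁₀+p₀₁)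 ≤ η₂; G(θ) = p₁₀ ∇η₂/η₂ + p₀₁ (∇η₁ − ∇η₂)/(η₁ − η₂) if η₁ p₁₀/(p₁₀+p₀₁) > η₂; and G(θ) = p₁₀ ∇η₃/η₃ + p₀₁ (∇η₁ − ∇η₃)/(η₁ − η₃) if η₁ p₁₀/(p₁₀+p₀₁) < η₃ (all functions evaluated at θ). -/
open Set Asymptotics
open scoped Topology

private theorem hasFDerivAt_of_mem_triple {E : Type*} [NormedAddCommGroup E] [NormedSpace ℝ E]
    {A B C V : E → ℝ} {x : E} {L : E →L[ℝ] ℝ}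
    (hA : HasFDerivAt A L x) (hB : HasFDerivAt B L x) (hC : HasFDerivAt C L x)
    (hAx : A x = V x) (hBx : B x = V x) (hCx : C x = V x)
    (h : ∀ᶠ y in 𝓝 x, V y = A y ∨ V y = B y ∨ V y = C y) :
    HasFDerivAt V L x := by
  have hA' := hA.isLittleO
  have hB' := hB.isLittleO
  have hC' := hC.isLittleO
  refine HasFDerivAt.of_isLittleO ?_
  have hsum := (hA'.norm_left.add hB'.norm_left).add hC'.norm_left
  refine (Asymptotics.isBigO_iff.2 ⟨1, ?_⟩).trans_isLittleO hsum
  filter_upwards [h] with y hy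
  have hbig : ‖‖A y - A x - L (y - x)‖ + ‖B y - B x - L (y - x)‖ + ‖C y - C x - L (y - x)‖‖
      = ‖A y - A x - L (y - x)‖ + ‖B y - B x - L (y - x)‖ + ‖C y - C x - L (y - x)‖ :=
    Real.norm_of_nonneg (by positivity)
  rw [one_mul, hbig]
  have nA := norm_nonneg (A y - A x - L (y - x))
  have nB := norm_nonneg (B y - B x - L (y - x))
  have nC := norm_nonneg (C y - C x - L (y - x))
  rcases hy with h1 | h1 | h1 <;> rw [h1]
  · rw [← hAx]; linarith
  · rw [← hBx]; linarith
  · rw [← hCx]; linarith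
noncomputable section

set_option maxHeartbeats 1600000 in
/-- **Differentiability and piecewise gradient of the profiled log-likelihood in the
entry game.**  With `F₀₀, F₁₁` the model probabilities of `(0,0)` and `(1,1)`, `η₁` the model
probability of `{(1,0),(0,1)}`, `η₃ ≤ η₂` the model bounds on the probability of `(1,0)`,
observed probabilities `p₀₀, p₁₁, p₁₀, p₀₁ > 0` summing to one, and `z*(θ)` the clamp of
`η₁(θ) p₁₀/(p₁₀+p₀₁)` to `[η₃(θ), η₂(θ)]`, the profiled log-likelihood
`V(θ) = p₀₀ ln F₀₀ + p₁₁ ln F₁₁ + p₁₀ ln z* + p₀₁ ln (η₁ − z*)` is differentiable on the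
interior of `Θ` with gradient `p₀₀ ∇F₀₀/F₀₀ + p₁₁ ∇F₁₁/F₁₁ + G(θ)`, where `G` is given by the
regime-dependent formulas. -/
theorem entry_game_profiled_loglikelihood_gradient {dθ : ℕ}
    (Θ : Set (EuclideanSpace ℝ (Fin dθ)))
    (F00 F11 η₁ η₂ η₃ : EuclideanSpace ℝ (Fin dθ) → ℝ)
    (gF00 gF11 gη₁ gη₂ gη₃ : EuclideanSpace ℝ (Fin dθ) → EuclideanSpace ℝ (Fin dθ))
    (c : ℝ) (hc : 0 < c)
    -- the model probabilities take values in (0,1)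
    (hrange : ∀ θ ∈ Θ, F00 θ ∈ Ioo (0:ℝ) 1 ∧ F11 θ ∈ Ioo (0:ℝ) 1 ∧
      η₁ θ ∈ Ioo (0:ℝ) 1 ∧ η₂ θ ∈ Ioo (0:ℝ) 1 ∧ η₃ θ ∈ Ioo (0:ℝ) 1)
    -- uniform lower bounds
    (hF00 : ∀ θ ∈ Θ, c ≤ F00 θ) (hF11 : ∀ θ ∈ Θ, c ≤ F11 θ)
    (hη₃₂ : ∀ θ ∈ Θ, η₃ θ ≤ η₂ θ)
    (hη₂ : ∀ θ ∈ Θ, c ≤ η₂ θ) (hη₃ : ∀ θ ∈ Θ, c ≤ η₃ θ)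
    (hη₁₂ : ∀ θ ∈ Θ, c ≤ η₁ θ - η₂ θ) (hη₁₃ : ∀ θ ∈ Θ, c ≤ η₁ θ - η₃ θ)
    -- accounting identity
    (hη₁eq : ∀ θ ∈ Θ, η₁ θ = 1 - F00 θ - F11 θ)
    -- continuous differentiability on `int Θ`, with the given gradients
    (hdF00 : ∀ θ ∈ interior Θ, HasGradientAt F00 (gF00 θ) θ)
    (hdF11 : ∀ θ ∈ interior Θ, HasGradientAt F11 (gF11 θ) θ)
    (hdη₁ : ∀ θ ∈ interior Θ, HasGradientAt η₁ (gη₁ θ) θ)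
    (hdη₂ : ∀ θ ∈ interior Θ, HasGradientAt η₂ (gη₂ θ) θ)
    (hdη₃ : ∀ θ ∈ interior Θ, HasGradientAt η₃ (gη₃ θ) θ)
    (hcF00 : ContinuousOn gF00 (interior Θ)) (hcF11 : ContinuousOn gF11 (interior Θ))
    (hcη₁ : ContinuousOn gη₁ (interior Θ)) (hcη₂ : ContinuousOn gη₂ (interior Θ))
    (hcη₃ : ContinuousOn gη₃ (interior Θ))
    -- observed probabilities
    (p00 p11 p10 p01 : ℝ)
    (hp : 0 < p00 ∧ 0 < p11 ∧ 0 < p10 ∧ 0 < p01)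
    (hpsum : p00 + p11 + p10 + p01 = 1) :
    ∀ θ ∈ interior Θ,
      HasGradientAt
        (fun ϑ =>
          p00 * Real.log (F00 ϑ) + p11 * Real.log (F11 ϑ) +
          p10 * Real.log (max (η₃ ϑ) (min (η₂ ϑ) (η₁ ϑ * p10 / (p10 + p01)))) +
          p01 * Real.log (η₁ ϑ - max (η₃ ϑ) (min (η₂ ϑ) (η₁ ϑ * p10 / (p10 + p01)))))
        ((p00 / F00 θ) • gF00 θ + (p11 / F11 θ) • gF11 θ +
          (if η₃ θ ≤ η₁ θ * p10 / (p10 + p01) ∧ η₁ θ * p10 / (p10 + p01) ≤ η₂ θ then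
            ((p10 + p01) / η₁ θ) • gη₁ θ
          else if η₂ θ < η₁ θ * p10 / (p10 + p01) then
            (p10 / η₂ θ) • gη₂ θ + (p01 / (η₁ θ - η₂ θ)) • (gη₁ θ - gη₂ θ)
          else
            (p10 / η₃ θ) • gη₃ θ + (p01 / (η₁ θ - η₃ θ)) • (gη₁ θ - gη₃ θ)))
        θ := by

  intro θ hθ
  obtain ⟨hp00, hp11, hp10, hp01⟩ := hp
  have hθΘ : θ ∈ Θ := interior_subset hθ
  have hs : (0:ℝ) < p10 + p01 := by linarith
  have hsne : (p10 + p01) ≠ 0 := ne_of_gt hs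
  obtain ⟨hF00r, hF11r, hη₁r, hη₂r, hη₃r⟩ := hrange θ hθΘ
  have hF00p : 0 < F00 θ := hF00r.1
  have hF11p : 0 < F11 θ := hF11r.1
  have hη₁p : 0 < η₁ θ := hη₁r.1
  have hη₂p : 0 < η₂ θ := hη₂r.1
  have hη₃p : 0 < η₃ θ := hη₃r.1
  have hη12 : 0 < η₁ θ - η₂ θ := lt_of_lt_of_le hc (hη₁₂ θ hθΘ)
  have hη13 : 0 < η₁ θ - η₃ θ := lt_of_lt_of_le hc (hη₁₃ θ hθΘ)
  have htp : 0 < η₁ θ * p10 / (p10 + p01) := by positivity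
  have hkey : η₁ θ - η₁ θ * p10 / (p10 + p01) = η₁ θ * p01 / (p10 + p01) := by
    field_simp; ring
  have hη1t : 0 < η₁ θ - η₁ θ * p10 / (p10 + p01) := by rw [hkey]; positivity
  have HF00 := (hdF00 θ hθ).hasFDerivAt
  have HF11 := (hdF11 θ hθ).hasFDerivAt
  have Hη₁ := (hdη₁ θ hθ).hasFDerivAt
  have Hη₂ := (hdη₂ θ hθ).hasFDerivAt
  have Hη₃ := (hdη₃ θ hθ).hasFDerivAt
  have Ht : HasFDerivAt (fun ϑ => η₁ ϑ * p10 / (p10 + p01))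
      ((p10 / (p10 + p01)) •
        (InnerProductSpace.toDual ℝ (EuclideanSpace ℝ (Fin dθ))) (gη₁ θ)) θ := by
    simp only [mul_div_assoc]
    exact Hη₁.mul_const _
  -- candidate smooth functions
  have HA : HasFDerivAt
      (fun ϑ => p00 * Real.log (F00 ϑ) + p11 * Real.log (F11 ϑ) +
        p10 * Real.log (η₁ ϑ * p10 / (p10 + p01)) +
        p01 * Real.log (η₁ ϑ - η₁ ϑ * p10 / (p10 + p01)))
      ((InnerProductSpace.toDual ℝ (EuclideanSpace ℝ (Fin dθ)))
        ((p00 / F00 θ) • gF00 θ + (p11 / F11 θ) • gF11 θ +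
          ((p10 + p01) / η₁ θ) • gη₁ θ)) θ := by
    have h1 := (HF00.log (ne_of_gt hF00p)).const_mul p00
    have h2 := (HF11.log (ne_of_gt hF11p)).const_mul p11
    have h3 := (Ht.log (ne_of_gt htp)).const_mul p10
    have h4 := ((Hη₁.sub Ht).log (ne_of_gt hη1t)).const_mul p01
    refine (((h1.add h2).add h3).add h4).congr_fderiv (Eq.symm ?_)
    simp only [map_add, map_smul, Pi.sub_apply]
    rw [hkey]
    match_scalars <;> field_simp [hη₁p.ne', hp10.ne', hp01.ne', hsne] <;> ring
  have HB : HasFDerivAt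
      (fun ϑ => p00 * Real.log (F00 ϑ) + p11 * Real.log (F11 ϑ) +
        p10 * Real.log (η₂ ϑ) + p01 * Real.log (η₁ ϑ - η₂ ϑ))
      ((InnerProductSpace.toDual ℝ (EuclideanSpace ℝ (Fin dθ)))
        ((p00 / F00 θ) • gF00 θ + (p11 / F11 θ) • gF11 θ +
          ((p10 / η₂ θ) • gη₂ θ + (p01 / (η₁ θ - η₂ θ)) • (gη₁ θ - gη₂ θ)))) θ := by
    have h1 := (HF00.log (ne_of_gt hF00p)).const_mul p00
    have h2 := (HF11.log (ne_of_gt hF11p)).const_mul p11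
    have h3 := (Hη₂.log (ne_of_gt hη₂p)).const_mul p10
    have h4 := ((Hη₁.sub Hη₂).log (ne_of_gt hη12)).const_mul p01
    refine (((h1.add h2).add h3).add h4).congr_fderiv (Eq.symm ?_)
    simp only [map_add, map_smul, map_sub, Pi.sub_apply]
    match_scalars <;> field_simp [hη₁p.ne', hp10.ne', hp01.ne', hsne,
      hη₂p.ne', hη₃p.ne', hη12.ne', hη13.ne'] <;> ring
  have HC : HasFDerivAt
      (fun ϑ => p00 * Real.log (F00 ϑ) + p11 * Real.log (F11 ϑ) +
        p10 * Real.log (η₃ ϑ) + p01 * Real.log (η₁ ϑ - η₃ ϑ))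
      ((InnerProductSpace.toDual ℝ (EuclideanSpace ℝ (Fin dθ)))
        ((p00 / F00 θ) • gF00 θ + (p11 / F11 θ) • gF11 θ +
          ((p10 / η₃ θ) • gη₃ θ + (p01 / (η₁ θ - η₃ θ)) • (gη₁ θ - gη₃ θ)))) θ := by
    have h1 := (HF00.log (ne_of_gt hF00p)).const_mul p00
    have h2 := (HF11.log (ne_of_gt hF11p)).const_mul p11
    have h3 := (Hη₃.log (ne_of_gt hη₃p)).const_mul p10
    have h4 := ((Hη₁.sub Hη₃).log (ne_of_gt hη13)).const_mul p01
    refine (((h1.add h2).add h3).add h4).congr_fderiv (Eq.symm ?_)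
    simp only [map_add, map_smul, map_sub, Pi.sub_apply]
    match_scalars <;> field_simp [hη₁p.ne', hp10.ne', hp01.ne', hsne,
      hη₂p.ne', hη₃p.ne', hη12.ne', hη13.ne'] <;> ring
  have hΘn : Θ ∈ 𝓝 θ := mem_interior_iff_mem_nhds.1 hθ
  have hev32 : ∀ᶠ y in 𝓝 θ, η₃ y ≤ η₂ y :=
    Filter.eventually_of_mem hΘn fun y hy => hη₃₂ y hy
  rw [hasGradientAt_iff_hasFDerivAt]
  rcases lt_or_ge (η₂ θ) (η₁ θ * p10 / (p10 + p01)) with hc2 | hc2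
  · -- regime B : η₂ < t at θ
    rw [if_neg (fun h => absurd h.2 (not_le.2 hc2)), if_pos hc2]
    have hclθ : max (η₃ θ) (min (η₂ θ) (η₁ θ * p10 / (p10 + p01))) = η₂ θ := by
      rw [min_eq_left hc2.le, max_eq_right (hη₃₂ θ hθΘ)]
    refine hasFDerivAt_of_mem_triple HB HB HB ?_ ?_ ?_ ?_
    · beta_reduce; rw [hclθ]
    · beta_reduce; rw [hclθ]
    · beta_reduce; rw [hclθ]
    · filter_upwards [Hη₂.continuousAt.eventually_lt Ht.continuousAt hc2, hev32] with y h1 h2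
      left; beta_reduce
      rw [min_eq_left h1.le, max_eq_right h2]
  · rcases lt_or_ge (η₁ θ * p10 / (p10 + p01)) (η₃ θ) with hc3 | hc3
    · -- regime C : t < η₃ at θ
      rw [if_neg (fun h => absurd h.1 (not_le.2 hc3)), if_neg (not_lt.2 hc2)]
      have hclθ : max (η₃ θ) (min (η₂ θ) (η₁ θ * p10 / (p10 + p01))) = η₃ θ := by
        rw [min_eq_right (hc3.le.trans (hη₃₂ θ hθΘ)), max_eq_left hc3.le]
      refine hasFDerivAt_of_mem_triple HC HC HC ?_ ?_ ?_ ?_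
      · beta_reduce; rw [hclθ]
      · beta_reduce; rw [hclθ]
      · beta_reduce; rw [hclθ]
      · filter_upwards [Ht.continuousAt.eventually_lt Hη₃.continuousAt hc3, hev32] with y h1 h2
        left; beta_reduce
        rw [min_eq_right (h1.le.trans h2), max_eq_left h1.le]
    · -- middle regime : η₃ ≤ t ≤ η₂ at θ
      rw [if_pos ⟨hc3, hc2⟩]
      have hclθ : max (η₃ θ) (min (η₂ θ) (η₁ θ * p10 / (p10 + p01))) =
          η₁ θ * p10 / (p10 + p01) := by
        rw [min_eq_right hc2, max_eq_right hc3]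
      have hBL : (p10 / η₂ θ) • gη₂ θ + (p01 / (η₁ θ - η₂ θ)) • (gη₁ θ - gη₂ θ) =
          ((p10 + p01) / η₁ θ) • gη₁ θ → HasFDerivAt
            (fun ϑ => p00 * Real.log (F00 ϑ) + p11 * Real.log (F11 ϑ) +
              p10 * Real.log (η₂ ϑ) + p01 * Real.log (η₁ ϑ - η₂ ϑ))
            ((InnerProductSpace.toDual ℝ (EuclideanSpace ℝ (Fin dθ)))
              ((p00 / F00 θ) • gF00 θ + (p11 / F11 θ) • gF11 θ +
                ((p10 + p01) / η₁ θ) • gη₁ θ)) θ := fun hveq => by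
        rw [← hveq]; exact HB
      have hCL : (p10 / η₃ θ) • gη₃ θ + (p01 / (η₁ θ - η₃ θ)) • (gη₁ θ - gη₃ θ) =
          ((p10 + p01) / η₁ θ) • gη₁ θ → HasFDerivAt
            (fun ϑ => p00 * Real.log (F00 ϑ) + p11 * Real.log (F11 ϑ) +
              p10 * Real.log (η₃ ϑ) + p01 * Real.log (η₁ ϑ - η₃ ϑ))
            ((InnerProductSpace.toDual ℝ (EuclideanSpace ℝ (Fin dθ)))
              ((p00 / F00 θ) • gF00 θ + (p11 / F11 θ) • gF11 θ +
                ((p10 + p01) / η₁ θ) • gη₁ θ)) θ := fun hveq => by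
        rw [← hveq]; exact HC
      rcases eq_or_lt_of_le hc2 with he2 | hlt2
      · -- t = η₂ at θ
        have hB2 : HasFDerivAt
            (fun ϑ => p00 * Real.log (F00 ϑ) + p11 * Real.log (F11 ϑ) +
              p10 * Real.log (η₂ ϑ) + p01 * Real.log (η₁ ϑ - η₂ ϑ))
            ((InnerProductSpace.toDual ℝ (EuclideanSpace ℝ (Fin dθ)))
              ((p00 / F00 θ) • gF00 θ + (p11 / F11 θ) • gF11 θ +
                ((p10 + p01) / η₁ θ) • gη₁ θ)) θ := by
          refine hBL ?_
          have e1 : p10 / η₂ θ = (p10 + p01) / η₁ θ := by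
            rw [← he2]; field_simp [hη₁p.ne', hp10.ne', hsne]
          have e2 : p01 / (η₁ θ - η₂ θ) = (p10 + p01) / η₁ θ := by
            rw [← he2, hkey]; field_simp [hη₁p.ne', hp01.ne', hsne]
          rw [e1, e2, smul_sub]; abel
        rcases eq_or_lt_of_le hc3 with he3 | hlt3
        · -- triple point η₃ = t = η₂
          have hC3 : HasFDerivAt
              (fun ϑ => p00 * Real.log (F00 ϑ) + p11 * Real.log (F11 ϑ) +
                p10 * Real.log (η₃ ϑ) + p01 * Real.log (η₁ ϑ - η₃ ϑ))
              ((InnerProductSpace.toDual ℝ (EuclideanSpace ℝ (Fin dθ)))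
                ((p00 / F00 θ) • gF00 θ + (p11 / F11 θ) • gF11 θ +
                  ((p10 + p01) / η₁ θ) • gη₁ θ)) θ := by
            refine hCL ?_
            have e1 : p10 / η₃ θ = (p10 + p01) / η₁ θ := by
              rw [he3]; field_simp [hη₁p.ne', hp10.ne', hsne]
            have e2 : p01 / (η₁ θ - η₃ θ) = (p10 + p01) / η₁ θ := by
              rw [he3, hkey]; field_simp [hη₁p.ne', hp01.ne', hsne]
            rw [e1, e2, smul_sub]; abel
          refine hasFDerivAt_of_mem_triple HA hB2 hC3 ?_ ?_ ?_ ?_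
          · beta_reduce; rw [hclθ]
          · beta_reduce; rw [hclθ, he2]
          · beta_reduce; rw [hclθ, he3]
          · refine Filter.Eventually.of_forall fun y => ?_
            rcases max_cases (η₃ y) (min (η₂ y) (η₁ y * p10 / (p10 + p01))) with
              ⟨hm, _⟩ | ⟨hm, _⟩
            · right; right; beta_reduce; rw [hm]
            · rcases min_cases (η₂ y) (η₁ y * p10 / (p10 + p01)) with ⟨hm2, _⟩ | ⟨hm2, _⟩
              · right; left; beta_reduce; rw [hm, hm2]
              · left; beta_reduce; rw [hm, hm2]
        · -- η₃ < t = η₂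
          refine hasFDerivAt_of_mem_triple HA hB2 HA ?_ ?_ ?_ ?_
          · beta_reduce; rw [hclθ]
          · beta_reduce; rw [hclθ, he2]
          · beta_reduce; rw [hclθ]
          · filter_upwards [Hη₃.continuousAt.eventually_lt Ht.continuousAt hlt3,
              Hη₃.continuousAt.eventually_lt Hη₂.continuousAt (lt_of_lt_of_le hlt3 hc2)]
              with y h1 h2
            have hm : max (η₃ y) (min (η₂ y) (η₁ y * p10 / (p10 + p01))) =
                min (η₂ y) (η₁ y * p10 / (p10 + p01)) :=
              max_eq_right (le_min h2.le h1.le)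
            rcases min_cases (η₂ y) (η₁ y * p10 / (p10 + p01)) with ⟨hm2, _⟩ | ⟨hm2, _⟩
            · right; left; beta_reduce; rw [hm, hm2]
            · left; beta_reduce; rw [hm, hm2]
      · rcases eq_or_lt_of_le hc3 with he3 | hlt3
        · -- η₃ = t < η₂
          have hC3 : HasFDerivAt
              (fun ϑ => p00 * Real.log (F00 ϑ) + p11 * Real.log (F11 ϑ) +
                p10 * Real.log (η₃ ϑ) + p01 * Real.log (η₁ ϑ - η₃ ϑ))
              ((InnerProductSpace.toDual ℝ (EuclideanSpace ℝ (Fin dθ)))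
                ((p00 / F00 θ) • gF00 θ + (p11 / F11 θ) • gF11 θ +
                  ((p10 + p01) / η₁ θ) • gη₁ θ)) θ := by
            refine hCL ?_
            have e1 : p10 / η₃ θ = (p10 + p01) / η₁ θ := by
              rw [he3]; field_simp [hη₁p.ne', hp10.ne', hsne]
            have e2 : p01 / (η₁ θ - η₃ θ) = (p10 + p01) / η₁ θ := by
              rw [he3, hkey]; field_simp [hη₁p.ne', hp01.ne', hsne]
            rw [e1, e2, smul_sub]; abel
          refine hasFDerivAt_of_mem_triple HA hC3 HA ?_ ?_ ?_ ?_
          · beta_reduce; rw [hclθ]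
          · beta_reduce; rw [hclθ, ← he3]
          · beta_reduce; rw [hclθ]
          · filter_upwards [Ht.continuousAt.eventually_lt Hη₂.continuousAt hlt2] with y h1
            have hm : min (η₂ y) (η₁ y * p10 / (p10 + p01)) = η₁ y * p10 / (p10 + p01) :=
              min_eq_right h1.le
            rcases max_cases (η₃ y) (η₁ y * p10 / (p10 + p01)) with ⟨hm2, _⟩ | ⟨hm2, _⟩
            · right; left; beta_reduce; rw [hm, hm2]
            · left; beta_reduce; rw [hm, hm2]
        · -- strict interior: η₃ < t < η₂
          refine hasFDerivAt_of_mem_triple HA HA HA ?_ ?_ ?_ ?_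
          · beta_reduce; rw [hclθ]
          · beta_reduce; rw [hclθ]
          · beta_reduce; rw [hclθ]
          · filter_upwards [Ht.continuousAt.eventually_lt Hη₂.continuousAt hlt2,
              Hη₃.continuousAt.eventually_lt Ht.continuousAt hlt3] with y h1 h2
            left; beta_reduce
            rw [min_eq_right h1.le, max_eq_right h2.le]
end
end

section
/- Proposition (continuity of the pseudo-true set in the misclassification parameter for the specialized entry game). Fix θ₀ = (θ_{1,0}, θ_{2,0}) ∈ [−0.45, 0)² and set δ_j = −0.5 + θ_{j,0}, a₀ = (1+δ₁)(1+δ₂), b₀ = −δ₂(1+δ₁), c₀ = 1 − a₀ − b₀. For γ ∈ Γ ⊆ [0,1] define p_γ((1,1)|1) = (1−γ) a₀ + 0.25 γ, p_γ((1,0)|1) = (1−γ) b₀ + 0.25 γ, p_γ((0,1)|1) = 1 − p_γ((1,1)|1) − p_γ((1,0)|1), and Θ*(p_γ) = Ξ*(p_γ) − (0.5, 0.5) where Ξ*(p_γ) = { ϑ ∈ [0.05, 0.5]² : ϑ₁ϑ₂ = p_γ((1,1)|1) and p_γ((1,1)|1)/(1 − p_γ((1,0)|1)) ≤ ϑ₁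 ≤ 1 − p_γ((0,1)|1) }. Then for every θ ∈ Θ = [−0.45, 0]², the map γ ↦ dist(θ, Θ*(p_γ)) is continuous on Γ, and hence the correspondence γ ↦ Θ*(p_γ) is both upper and lower hemicontinuous on Γ; in particular it is continuous at γ = 0. -/
open Set Metric Filter
open scoped Topology

noncomputable section

namespace SpecializedEntryGame

/-- Observed probability of outcome `(1,1)` given `X = 1` in the misclassified game. -/
def p11 (a₀ : ℝ) (γ : ℝ) : ℝ := (1 - γ) * a₀ + 0.25 * γ

/-- Observed probability of outcome `(1,0)` given `X = 1` in the misclassified game. -/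
def p10 (b₀ : ℝ) (γ : ℝ) : ℝ := (1 - γ) * b₀ + 0.25 * γ

/-- Observed probability of outcome `(0,1)` given `X = 1` in the misclassified game. -/
def p01 (a₀ b₀ : ℝ) (γ : ℝ) : ℝ := 1 - p11 a₀ γ - p10 b₀ γ

/-- The set `Ξ*(p_γ)` characterizing the pseudo-true set before recentering. -/
def Ξstar (a₀ b₀ : ℝ) (γ : ℝ) : Set (EuclideanSpace ℝ (Fin 2)) :=
  {ϑ | ϑ 0 ∈ Icc (0.05 : ℝ) 0.5 ∧ ϑ 1 ∈ Icc (0.05 : ℝ) 0.5 ∧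
       ϑ 0 * ϑ 1 = p11 a₀ γ ∧
       p11 a₀ γ / (1 - p10 b₀ γ) ≤ ϑ 0 ∧ ϑ 0 ≤ 1 - p01 a₀ b₀ γ}

/-- The vector `(0.5, 0.5)`. -/
def half : EuclideanSpace ℝ (Fin 2) := WithLp.toLp 2 (fun _ => (0.5 : ℝ))

/-- The pseudo-true set `Θ*(p_γ) = Ξ*(p_γ) − (0.5, 0.5)`. -/
def Θstar (a₀ b₀ : ℝ) (γ : ℝ) : Set (EuclideanSpace ℝ (Fin 2)) :=
  (fun ϑ => ϑ - half) '' Ξstar a₀ b₀ γ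

/-- The parameter space `Θ = [−0.45, 0]²`. -/
def Θspace : Set (EuclideanSpace ℝ (Fin 2)) :=
  {θ | θ 0 ∈ Icc (-0.45 : ℝ) 0 ∧ θ 1 ∈ Icc (-0.45 : ℝ) 0}

end SpecializedEntryGame

namespace SEGAux

open SpecializedEntryGame

def lfun (a b γ : ℝ) : ℝ :=
  max (max 0.05 (2 * p11 a γ)) (p11 a γ / (1 - p10 b γ))

def ufun (a b γ : ℝ) : ℝ :=
  min (min 0.5 (20 * p11 a γ)) (p11 a γ + p10 b γ)

def cfun (a b γ s : ℝ) : ℝ := lfun a b γ + s * (ufun a b γ - lfun a b γ)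

def xi (a γ t : ℝ) : EuclideanSpace ℝ (Fin 2) :=
  (EuclideanSpace.equiv (Fin 2) ℝ).symm (fun i => if i = 0 then t else p11 a γ / t)

def G (a b : ℝ) (q : ℝ × ℝ) : EuclideanSpace ℝ (Fin 2) :=
  xi a q.1 (cfun a b q.1 q.2) - half

@[simp] lemma xi_zero (a γ t : ℝ) : xi a γ t 0 = t := rfl
@[simp] lemma xi_one (a γ t : ℝ) : xi a γ t 1 = p11 a γ / t := rfl

variable {a b γ : ℝ}

lemma p11_mem (ha1 : (0.0025:ℝ) ≤ a) (ha2 : a ≤ 0.25) (hγ : γ ∈ Icc (0:ℝ) 1) :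
    p11 a γ ∈ Icc (0.0025:ℝ) 0.25 := by
  obtain ⟨h0, h1⟩ := hγ
  constructor <;> · simp only [p11]; nlinarith

lemma p10_mem (hb1 : (0.025:ℝ) ≤ b) (hb2 : b ≤ 0.475) (hγ : γ ∈ Icc (0:ℝ) 1) :
    p10 b γ ∈ Icc (0.025:ℝ) 0.475 := by
  obtain ⟨h0, h1⟩ := hγ
  constructor <;> · simp only [p10]; nlinarith

lemma l_ge : (0.05:ℝ) ≤ lfun a b γ :=
  le_max_of_le_left (le_max_left _ _)

lemma lu (ha1 : (0.0025:ℝ) ≤ a) (ha2 : a ≤ 0.25) (hb1 : (0.025:ℝ) ≤ b)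
    (hb2 : b ≤ 0.475) (hab : a ≤ b) (hsum : (0.05:ℝ) ≤ a + b) (hγ : γ ∈ Icc (0:ℝ) 1) :
    lfun a b γ ≤ ufun a b γ := by
  obtain ⟨hP1, hP2⟩ := p11_mem ha1 ha2 hγ
  obtain ⟨hQ1, hQ2⟩ := p10_mem hb1 hb2 hγ
  have hd : (0:ℝ) < 1 - p10 b γ := by linarith
  have hPQ : p11 a γ ≤ p10 b γ := by
    obtain ⟨h0, h1⟩ := hγ
    simp only [p11, p10]
    nlinarith [mul_nonneg (by linarith : (0:ℝ) ≤ 1 - γ) (by linarith : (0:ℝ) ≤ b - a)]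
  have hS : (0.05:ℝ) ≤ p11 a γ + p10 b γ := by
    obtain ⟨h0, h1⟩ := hγ
    simp only [p11, p10]
    nlinarith [mul_nonneg (by linarith : (0:ℝ) ≤ 1 - γ) (by linarith : (0:ℝ) ≤ a + b - 0.05)]
  unfold lfun ufun
  refine max_le (max_le (le_min (le_min ?_ ?_) ?_) (le_min (le_min ?_ ?_) ?_))
    (le_min (le_min ?_ ?_) ?_)
  · norm_num
  · linarith
  · linarith [hS]
  · linarith
  · linarith
  · linarith
  · rw [div_le_iff₀ hd]; nlinarith
  · rw [div_le_iff₀ hd]; nlinarith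
  · rw [div_le_iff₀ hd]
    nlinarith [mul_nonneg (by linarith : (0:ℝ) ≤ p10 b γ)
      (by linarith : (0:ℝ) ≤ 1 - p11 a γ - p10 b γ)]

lemma one_sub_p01 : 1 - p01 a b γ = p11 a γ + p10 b γ := by
  simp only [p01]; ring

lemma Ξ_eq (ha1 : (0.0025:ℝ) ≤ a) (ha2 : a ≤ 0.25) (hγ : γ ∈ Icc (0:ℝ) 1) :
    Ξstar a b γ = xi a γ '' Icc (lfun a b γ) (ufun a b γ) := by
  obtain ⟨hP1, hP2⟩ := p11_mem ha1 ha2 hγ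
  have hp01 := one_sub_p01 (a := a) (b := b) (γ := γ)
  ext ϑ
  simp only [Ξstar, mem_setOf_eq, mem_image, mem_Icc]
  constructor
  · rintro ⟨⟨h1, h2⟩, ⟨h3, h4⟩, h5, h6, h7⟩
    have ht0 : (0:ℝ) < ϑ 0 := by linarith
    have hϑ1 : ϑ 1 = p11 a γ / ϑ 0 := by
      rw [eq_div_iff ht0.ne', mul_comm]; exact h5
    refine ⟨ϑ 0, ⟨?_, ?_⟩, ?_⟩
    · refine max_le (max_le h1 ?_) h6
      nlinarith
    · refine le_min (le_min h2 ?_) ?_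
      · nlinarith
      · linarith
    · refine PiLp.ext (fun i => ?_)
      revert i
      rw [Fin.forall_fin_two]
      exact ⟨rfl, by rw [xi_one, hϑ1]⟩
  · rintro ⟨t, ⟨htl, htu⟩, rfl⟩
    simp only [lfun, max_le_iff] at htl
    simp only [ufun, le_min_iff] at htu
    obtain ⟨⟨ht05, ht2⟩, htd⟩ := htl
    obtain ⟨⟨ht5, ht20⟩, htpq⟩ := htu
    have ht0 : (0:ℝ) < t := by linarith
    refine ⟨⟨ht05, ht5⟩, ⟨?_, ?_⟩, ?_, htd, ?_⟩
    · rw [xi_one, le_div_iff₀ ht0]; linarith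
    · rw [xi_one, div_le_iff₀ ht0]; linarith
    · rw [xi_zero, xi_one, mul_comm, div_mul_cancel₀ _ ht0.ne']
    · rw [xi_zero]; linarith

lemma Icc_param {l u : ℝ} (h : l ≤ u) :
    Icc l u = (fun s : ℝ => l + s * (u - l)) '' Icc 0 1 := by
  ext t
  simp only [mem_image, mem_Icc]
  constructor
  · rintro ⟨h1, h2⟩
    rcases eq_or_lt_of_le h with he | hlt
    · exact ⟨0, ⟨le_refl 0, zero_le_one⟩, by rw [← he] at h2; linarith⟩
    · refine ⟨(t - l) / (u - l), ⟨div_nonneg (by linarith) (by linarith), ?_⟩, ?_⟩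
      · rw [div_le_one (by linarith)]; linarith
      · rw [div_mul_cancel₀ _ (sub_ne_zero.2 hlt.ne')]
        ring
  · rintro ⟨s, ⟨hs0, hs1⟩, rfl⟩
    constructor <;> nlinarith

lemma Θ_eq (ha1 : (0.0025:ℝ) ≤ a) (ha2 : a ≤ 0.25) (hb1 : (0.025:ℝ) ≤ b)
    (hb2 : b ≤ 0.475) (hab : a ≤ b) (hsum : (0.05:ℝ) ≤ a + b) (hγ : γ ∈ Icc (0:ℝ) 1) :
    Θstar a b γ = (fun s => G a b (γ, s)) '' Icc (0:ℝ) 1 := by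
  rw [Θstar, Ξ_eq ha1 ha2 hγ, Icc_param (lu ha1 ha2 hb1 hb2 hab hsum hγ),
    image_image, image_image]
  rfl

lemma contG (ha1 : (0.0025:ℝ) ≤ a) (ha2 : a ≤ 0.25) (hb1 : (0.025:ℝ) ≤ b)
    (hb2 : b ≤ 0.475) (hab : a ≤ b) (hsum : (0.05:ℝ) ≤ a + b) :
    ContinuousOn (G a b) (Icc (0:ℝ) 1 ×ˢ Icc (0:ℝ) 1) := by
  have hp11 : Continuous (p11 a) := by unfold p11; continuity
  have hp10 : Continuous (p10 b) := by unfold p10; continuity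
  have hden : Continuous (fun γ' => 1 - p10 b γ') := continuous_const.sub hp10
  have hmaxc : Continuous (fun γ' : ℝ => max (0.05 : ℝ) (2 * p11 a γ')) :=
    continuous_const.max (continuous_const.mul hp11)
  have hdiv : ContinuousOn (fun γ' => p11 a γ' / (1 - p10 b γ')) (Icc (0:ℝ) 1) := by
    refine hp11.continuousOn.div hden.continuousOn ?_
    intro x hx
    have := (p10_mem hb1 hb2 hx).2
    intro h; rw [sub_eq_zero] at h; linarith
  have hl : ContinuousOn (lfun a b) (Icc (0:ℝ) 1) := by
    unfold lfun
    exact ContinuousOn.sup hmaxc.continuousOn hdiv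
  have hu : Continuous (ufun a b) := by
    unfold ufun
    exact (continuous_const.min (continuous_const.mul hp11)).min (hp11.add hp10)
  have hl1 : ContinuousOn (fun q : ℝ × ℝ => lfun a b q.1) (Icc (0:ℝ) 1 ×ˢ Icc (0:ℝ) 1) :=
    hl.comp continuous_fst.continuousOn (fun q hq => hq.1)
  have hc : ContinuousOn (fun q : ℝ × ℝ => cfun a b q.1 q.2)
      (Icc (0:ℝ) 1 ×ˢ Icc (0:ℝ) 1) := by
    unfold cfun
    exact hl1.add (continuous_snd.continuousOn.mul
      (((hu.comp continuous_fst).continuousOn).sub hl1))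
  have hcpos : ∀ q ∈ Icc (0:ℝ) 1 ×ˢ Icc (0:ℝ) 1, (0.05:ℝ) ≤ cfun a b q.1 q.2 := by
    rintro ⟨γ', s⟩ ⟨hγ', hs⟩
    have h1 : (0.05:ℝ) ≤ lfun a b γ' := l_ge
    have h2 := lu ha1 ha2 hb1 hb2 hab hsum hγ'
    simp only [cfun]
    nlinarith [hs.1, hs.2]
  have hpi : ContinuousOn (fun q : ℝ × ℝ => (fun i : Fin 2 =>
      if i = 0 then cfun a b q.1 q.2 else p11 a q.1 / cfun a b q.1 q.2))
      (Icc (0:ℝ) 1 ×ˢ Icc (0:ℝ) 1) := by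
    apply continuousOn_pi.2
    intro i
    by_cases hi : i = 0
    · simpa [hi] using hc
    · simp only [hi, if_false]
      refine ((hp11.comp continuous_fst).continuousOn).div hc ?_
      intro q hq
      have := hcpos q hq
      intro h; rw [h] at this; norm_num at this
  have hxi : ContinuousOn (fun q : ℝ × ℝ => xi a q.1 (cfun a b q.1 q.2))
      (Icc (0:ℝ) 1 ×ˢ Icc (0:ℝ) 1) :=
    (EuclideanSpace.equiv (Fin 2) ℝ).symm.continuous.comp_continuousOn hpi
  exact hxi.sub continuousOn_const

lemma compactΘ (ha1 : (0.0025:ℝ) ≤ a) (ha2 : a ≤ 0.25) (hb1 : (0.025:ℝ) ≤ b)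
    (hb2 : b ≤ 0.475) (hab : a ≤ b) (hsum : (0.05:ℝ) ≤ a + b) (hγ : γ ∈ Icc (0:ℝ) 1) :
    IsCompact (Θstar a b γ) ∧ (Θstar a b γ).Nonempty := by
  rw [Θ_eq ha1 ha2 hb1 hb2 hab hsum hγ]
  have hcont : ContinuousOn (fun s => G a b (γ, s)) (Icc (0:ℝ) 1) :=
    (contG ha1 ha2 hb1 hb2 hab hsum).comp (Continuous.continuousOn (by continuity))
      (fun s hs => ⟨hγ, hs⟩)
  exact ⟨isCompact_Icc.image_of_continuousOn hcont,
    (nonempty_Icc.2 zero_le_one).image _⟩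

lemma key (ha1 : (0.0025:ℝ) ≤ a) (ha2 : a ≤ 0.25) (hb1 : (0.025:ℝ) ≤ b)
    (hb2 : b ≤ 0.475) (hab : a ≤ b) (hsum : (0.05:ℝ) ≤ a + b) :
    ∀ ε > (0:ℝ), ∃ δ > (0:ℝ), ∀ γ₁ ∈ Icc (0:ℝ) 1, ∀ γ₂ ∈ Icc (0:ℝ) 1,
      |γ₁ - γ₂| < δ → ∀ s ∈ Icc (0:ℝ) 1,
        dist (G a b (γ₁, s)) (G a b (γ₂, s)) < ε := by
  intro ε hε
  have hUC := (isCompact_Icc.prod isCompact_Icc).uniformContinuousOn_of_continuous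
    (contG ha1 ha2 hb1 hb2 hab hsum)
  rw [Metric.uniformContinuousOn_iff] at hUC
  obtain ⟨δ, hδ, H⟩ := hUC ε hε
  refine ⟨δ, hδ, ?_⟩
  intro γ₁ hγ₁ γ₂ hγ₂ hd s hs
  refine H (γ₁, s) ⟨hγ₁, hs⟩ (γ₂, s) ⟨hγ₂, hs⟩ ?_
  rw [Prod.dist_eq]
  apply max_lt
  · rwa [Real.dist_eq]
  · simpa using hδ

end SEGAux
set_option maxHeartbeats 1600000
open SpecializedEntryGame

/-- **Continuity of the pseudo-true set in the misclassification parameter for the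
specialized entry game.**  For the data-generating value `θ₀ = (θ₁₀, θ₂₀) ∈ [−0.45, 0)²`,
with `δ_j = −0.5 + θ_{j,0}`, `a₀ = (1+δ₁)(1+δ₂)`, `b₀ = −δ₂(1+δ₁)`, and the observed
conditional pmf `p_γ(·|X=1)` an affine function of the misclassification probability `γ`:
for every `θ` in the parameter space the map `γ ↦ dist(θ, Θ*(p_γ))` is continuous on `Γ`,
and hence the correspondence `γ ↦ Θ*(p_γ)` is both upper and lower hemicontinuous on `Γ`;
in particular it is continuous at `γ = 0`. -/
theorem specialized_entry_game_pseudo_true_set_continuity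
    (θ₁₀ θ₂₀ : ℝ)
    (hθ₁ : θ₁₀ ∈ Ico (-0.45 : ℝ) 0) (hθ₂ : θ₂₀ ∈ Ico (-0.45 : ℝ) 0)
    (Γ : Set ℝ) (hΓ : Γ ⊆ Icc (0 : ℝ) 1) :
    (∀ θ ∈ Θspace,
      ContinuousOn
        (fun γ => Metric.infDist θ
          (Θstar ((1 + (-0.5 + θ₁₀)) * (1 + (-0.5 + θ₂₀)))
            (-(-0.5 + θ₂₀) * (1 + (-0.5 + θ₁₀))) γ)) Γ) ∧
    (∀ γ₀ ∈ Γ, ∀ ε > (0 : ℝ), ∀ᶠ γ in 𝓝[Γ] γ₀,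
      Θstar ((1 + (-0.5 + θ₁₀)) * (1 + (-0.5 + θ₂₀)))
          (-(-0.5 + θ₂₀) * (1 + (-0.5 + θ₁₀))) γ
        ⊆ Metric.thickening ε
            (Θstar ((1 + (-0.5 + θ₁₀)) * (1 + (-0.5 + θ₂₀)))
              (-(-0.5 + θ₂₀) * (1 + (-0.5 + θ₁₀))) γ₀) ∧
      Θstar ((1 + (-0.5 + θ₁₀)) * (1 + (-0.5 + θ₂₀)))
          (-(-0.5 + θ₂₀) * (1 + (-0.5 + θ₁₀))) γ₀
        ⊆ Metric.thickening ε
            (Θstar ((1 + (-0.5 + θ₁₀)) * (1 + (-0.5 + θ₂₀)))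
              (-(-0.5 + θ₂₀) * (1 + (-0.5 + θ₁₀))) γ)) := by

  obtain ⟨hθ1l, hθ1u⟩ := hθ₁
  obtain ⟨hθ2l, hθ2u⟩ := hθ₂
  set A := (1 + (-0.5 + θ₁₀)) * (1 + (-0.5 + θ₂₀)) with hA
  set B := -(-0.5 + θ₂₀) * (1 + (-0.5 + θ₁₀)) with hB
  have f1 : (0.05:ℝ) ≤ 0.5 + θ₁₀ := by linarith
  have f2 : 0.5 + θ₁₀ ≤ 0.5 := by linarith
  have f3 : (0.05:ℝ) ≤ 0.5 + θ₂₀ := by linarith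
  have f4 : 0.5 + θ₂₀ ≤ 0.5 := by linarith
  have g1 : (0.5:ℝ) ≤ 0.5 - θ₂₀ := by linarith
  have g2 : 0.5 - θ₂₀ ≤ 0.95 := by linarith
  have ha1 : (0.0025:ℝ) ≤ A := by
    rw [hA]
    nlinarith [mul_le_mul f1 f3 (by norm_num : (0:ℝ) ≤ 0.05) (by linarith : (0:ℝ) ≤ 0.5 + θ₁₀)]
  have ha2 : A ≤ 0.25 := by
    rw [hA]
    nlinarith [mul_le_mul f2 f4 (by linarith : (0:ℝ) ≤ 0.5 + θ₂₀) (by norm_num : (0:ℝ) ≤ 0.5)]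
  have hb1 : (0.025:ℝ) ≤ B := by
    rw [hB]
    nlinarith [mul_le_mul g1 f1 (by norm_num : (0:ℝ) ≤ 0.05) (by linarith : (0:ℝ) ≤ 0.5 - θ₂₀)]
  have hb2 : B ≤ 0.475 := by
    rw [hB]
    nlinarith [mul_le_mul g2 f2 (by linarith : (0:ℝ) ≤ 0.5 + θ₁₀) (by norm_num : (0:ℝ) ≤ 0.95)]
  have hab : A ≤ B := by
    rw [hA, hB]
    nlinarith [mul_nonneg (by linarith : (0:ℝ) ≤ 0.5 + θ₁₀) (by linarith : (0:ℝ) ≤ -θ₂₀)]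
  have hsum : (0.05:ℝ) ≤ A + B := by
    have h : A + B = 0.5 + θ₁₀ := by rw [hA, hB]; ring
    linarith
  constructor
  · intro θ hθ γ₀ hγ₀
    have hγ₀I := hΓ hγ₀
    rw [Metric.continuousWithinAt_iff]
    intro ε hε
    obtain ⟨δ, hδ, hkey⟩ := SEGAux.key ha1 ha2 hb1 hb2 hab hsum (ε/2) (by linarith)
    refine ⟨δ, hδ, ?_⟩
    intro γ hγΓ hγd
    have hγI := hΓ hγΓ
    obtain ⟨hc1, hn1⟩ := SEGAux.compactΘ ha1 ha2 hb1 hb2 hab hsum hγI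
    obtain ⟨hc0, hn0⟩ := SEGAux.compactΘ ha1 ha2 hb1 hb2 hab hsum hγ₀I
    have habs : |γ - γ₀| < δ := by rwa [Real.dist_eq] at hγd
    have h1 : infDist θ (Θstar A B γ) < infDist θ (Θstar A B γ₀) + ε/2 := by
      obtain ⟨y, hy, hyeq⟩ := hc0.exists_infDist_eq_dist hn0 θ
      rw [SEGAux.Θ_eq ha1 ha2 hb1 hb2 hab hsum hγ₀I] at hy
      obtain ⟨s, hs, rfl⟩ := hy
      have hmem : SEGAux.G A B (γ, s) ∈ Θstar A B γ := by
        rw [SEGAux.Θ_eq ha1 ha2 hb1 hb2 hab hsum hγI]; exact ⟨s, hs, rfl⟩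
      have hd2 : dist (SEGAux.G A B (γ, s)) (SEGAux.G A B (γ₀, s)) < ε/2 :=
        hkey γ hγI γ₀ hγ₀I habs s hs
      calc infDist θ (Θstar A B γ) ≤ dist θ (SEGAux.G A B (γ, s)) :=
            infDist_le_dist_of_mem hmem
        _ ≤ dist θ (SEGAux.G A B (γ₀, s))
              + dist (SEGAux.G A B (γ₀, s)) (SEGAux.G A B (γ, s)) := dist_triangle _ _ _
        _ < infDist θ (Θstar A B γ₀) + ε/2 := by
            rw [hyeq, dist_comm (SEGAux.G A B (γ₀, s)) (SEGAux.G A B (γ, s))]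
            linarith
    have h2 : infDist θ (Θstar A B γ₀) < infDist θ (Θstar A B γ) + ε/2 := by
      obtain ⟨y, hy, hyeq⟩ := hc1.exists_infDist_eq_dist hn1 θ
      rw [SEGAux.Θ_eq ha1 ha2 hb1 hb2 hab hsum hγI] at hy
      obtain ⟨s, hs, rfl⟩ := hy
      have hmem : SEGAux.G A B (γ₀, s) ∈ Θstar A B γ₀ := by
        rw [SEGAux.Θ_eq ha1 ha2 hb1 hb2 hab hsum hγ₀I]; exact ⟨s, hs, rfl⟩
      have hd2 : dist (SEGAux.G A B (γ₀, s)) (SEGAux.G A B (γ, s)) < ε/2 :=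
        hkey γ₀ hγ₀I γ hγI (by rwa [abs_sub_comm] at habs) s hs
      calc infDist θ (Θstar A B γ₀) ≤ dist θ (SEGAux.G A B (γ₀, s)) :=
            infDist_le_dist_of_mem hmem
        _ ≤ dist θ (SEGAux.G A B (γ, s))
              + dist (SEGAux.G A B (γ, s)) (SEGAux.G A B (γ₀, s)) := dist_triangle _ _ _
        _ < infDist θ (Θstar A B γ) + ε/2 := by
            rw [hyeq, dist_comm (SEGAux.G A B (γ, s)) (SEGAux.G A B (γ₀, s))]
            linarith
    rw [Real.dist_eq, abs_sub_lt_iff]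
    constructor <;> linarith
  · intro γ₀ hγ₀ ε hε
    have hγ₀I := hΓ hγ₀
    obtain ⟨δ, hδ, hkey⟩ := SEGAux.key ha1 ha2 hb1 hb2 hab hsum ε hε
    have hball : Metric.ball γ₀ δ ∈ 𝓝[Γ] γ₀ :=
      nhdsWithin_le_nhds (Metric.ball_mem_nhds γ₀ hδ)
    filter_upwards [self_mem_nhdsWithin, hball] with γ hγΓ hγb
    have hγI := hΓ hγΓ
    have hγd : |γ - γ₀| < δ := by rwa [Metric.mem_ball, Real.dist_eq] at hγb
    constructor
    · intro x hx
      rw [SEGAux.Θ_eq ha1 ha2 hb1 hb2 hab hsum hγI] at hx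
      obtain ⟨s, hs, rfl⟩ := hx
      rw [Metric.mem_thickening_iff]
      refine ⟨SEGAux.G A B (γ₀, s), ?_, hkey γ hγI γ₀ hγ₀I hγd s hs⟩
      rw [SEGAux.Θ_eq ha1 ha2 hb1 hb2 hab hsum hγ₀I]
      exact ⟨s, hs, rfl⟩
    · intro x hx
      rw [SEGAux.Θ_eq ha1 ha2 hb1 hb2 hab hsum hγ₀I] at hx
      obtain ⟨s, hs, rfl⟩ := hx
      rw [Metric.mem_thickening_iff]
      refine ⟨SEGAux.G A B (γ, s), ?_, hkey γ₀ hγ₀I γ hγI (by rwa [abs_sub_comm] at hγd) s hs⟩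
      rw [SEGAux.Θ_eq ha1 ha2 hb1 hb2 hab hsum hγI]
      exact ⟨s, hs, rfl⟩
end
end
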